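/- In the transfinite construction over a full model N, for any variable x, any (unary) context C, and any ordinal α: (1) if t ≡ C[x] and t ↠_{≤α} t', then t' ≡ C'[x] for some context C' with C[t''] ↠_{≤α} C'[t''] for every term t''; (2) if C[x] ≻_α ρ then C[t] ≻_α ρ for every term t; (3) if C[x] ∼_α τ then C[t] ∼_α τ for every term t. -/

import Mathlib

/-! Infrastructure: the transfinite model construction over a full model of
classical higher-order logic, following Czajka, "A semantic approach to illative
combinatory logic", Section 4. -/

namespace ILM

/-- Type-free λ-terms over a set `C` of primitive constants (de Bruijn representation). -/
inductive Tm (C : Type) : Type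
  | var : Nat → Tm C
  | const : C → Tm C
  | app : Tm C → Tm C → Tm C
  | lam : Tm C → Tm C

namespace Tm

variable {C : Type}

/-- Renaming of free de Bruijn variables. -/
def rename (f : Nat → Nat) : Tm C → Tm C
  | .var n => .var (f n)
  | .const c => .const c
  | .app a b => .app (a.rename f) (b.rename f)
  | .lam a => .lam (a.rename fun n => match n with | 0 => 0 | m + 1 => f m + 1)

/-- Shift all free variables up by one. -/
def lift (t : Tm C) : Tm C := t.rename (· + 1)

/-- Simultaneous substitution. -/
def bind (σ : Nat → Tm C) : Tm C → Tm C
  | .var n => σ n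
  | .const c => .const c
  | .app a b => .app (a.bind σ) (b.bind σ)
  | .lam a => .lam (a.bind fun n => match n with | 0 => .var 0 | m + 1 => (σ m).lift)

/-- Substitution of `s` for the variable `0` (β-contraction of `(λ.t) s`). -/
def subst0 (t s : Tm C) : Tm C := t.bind fun n => match n with | 0 => s | m + 1 => .var m

end Tm

/-- Extended types `T⁺`: the constructors generate all expressions
`o | B | arr | ω | ε`; the grammar `T⁺ ::= T₁ | ω | ε`, `T₁ ::= T | T₁→T₁ | ω→T₁`
is captured by the predicate `IsT1` below. -/
inductive ETy (B : Type) : Type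
  | o : ETy B
  | base : B → ETy B
  | arr : ETy B → ETy B → ETy B
  | omega : ETy B
  | eps : ETy B
deriving DecidableEq

/-- Membership in `T₁` (so `T⁺ = T₁ ∪ {ω, ε}`). -/
inductive IsT1 {B : Type} : ETy B → Prop
  | o : IsT1 .o
  | base (b : B) : IsT1 (.base b)
  | arr {τ1 τ2 : ETy B} : IsT1 τ1 → IsT1 τ2 → IsT1 (.arr τ1 τ2)
  | omegaArr {τ2 : ETy B} : IsT1 τ2 → IsT1 (.arr .omega τ2)

/-- Membership in `T⁺`. -/
def IsTp {B : Type} (τ : ETy B) : Prop := IsT1 τ ∨ τ = .omega ∨ τ = .eps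

/-- The normalized arrow `τ₁ → τ₂`, implementing the notational conventions
`τ→ε = ε` (for `τ ≠ ε`), `ε→τ = ω` and `τ→ω = ω`. -/
def arrN {B : Type} : ETy B → ETy B → ETy B
  | _, .omega => .omega
  | .eps, _ => .omega
  | _, .eps => .eps
  | τ1, τ2 => .arr τ1 τ2

/-- The rank of a type. -/
def rank {B : Type} : ETy B → Nat
  | .arr τ1 τ2 => max (rank τ1 + 1) (rank τ2)
  | _ => 1

/-- A canonical system over domains `D` for the base types: the primitive
constants `Σ⁺ = {Ξ, L} ∪ {A_τ : τ ∈ B} ∪ ⋃_τ Σ_τ`, the sets `T_τ` of canonical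
terms of each type, the distinguished canonical constants `⊤, ⊥` of type `o`,
and the function `F` associating to each canonical term of a function type its
set-theoretic function, as constructed in the paper from a full model
`N = ⟨{D_τ}, I⟩` of classical higher-order logic.  The fields axiomatize the
construction: the sets of canonical terms of distinct types are disjoint sets of
closed normal terms (`T_ω` is the set of all terms, `T_ε = ∅`), for `τ₁ ≠ ω`
the canonical terms of type `τ₁→τ₂` are constants corresponding bijectively
(via `F`) to *all* set-theoretic functions from `T_{τ₁}` to `T_{τ₂}` (this is
where fullness of `N` enters), the canonical terms of type `ω→τ₂` are the terms
`λx.ρ` with `ρ ∈ T_{τ₂}` (with `F` giving constant functions), the canonical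
terms of base type `b` correspond bijectively to the domain `D b`, and those
of type `o` are exactly `⊤` and `⊥`. -/
structure CanSys (B : Type) (D : B → Type) where
  /-- the primitive constants `Σ⁺` -/
  C : Type
  cXi : C
  cL : C
  cA : B → C
  /-- the sets `T_τ` of canonical terms -/
  TT : ETy B → Set (Tm C)
  /-- the canonical constant `⊤ ∈ Σ_o` -/
  top : Tm C
  /-- the canonical constant `⊥ ∈ Σ_o` -/
  bot : Tm C
  /-- `F τ₁ τ₂ ρ t` : the value at `t ∈ T_{τ₁}` of the function associated with
  the canonical term `ρ ∈ T_{τ₁→τ₂}` -/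
  F : ETy B → ETy B → Tm C → Tm C → Tm C
  hXiL : cXi ≠ cL
  hXiA : ∀ b, cXi ≠ cA b
  hLA : ∀ b, cL ≠ cA b
  hAinj : Function.Injective cA
  TT_omega : TT .omega = Set.univ
  TT_eps : TT .eps = ∅
  TT_invalid : ∀ τ : ETy B, ¬ IsT1 τ → τ ≠ .omega → TT τ = ∅
  TT_o : TT .o = {top, bot}
  top_ne_bot : top ≠ bot
  TT_const : ∀ τ : ETy B, IsT1 τ → (∀ τ2, τ ≠ .arr .omega τ2) →
    ∀ t ∈ TT τ, ∃ c : C, t = .const c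
  TT_base_equiv : ∀ b : B, Nonempty (D b ≃ TT (.base b))
  TT_omega_arr : ∀ τ2 : ETy B, IsT1 τ2 → TT (.arr .omega τ2) = Tm.lam '' TT τ2
  F_omega : ∀ τ2 : ETy B, ∀ ρ ∈ TT τ2, ∀ t : Tm C, F .omega τ2 (.lam ρ) t = ρ
  F_mapsto : ∀ τ1 τ2 : ETy B, IsT1 (.arr τ1 τ2) →
    ∀ ρ ∈ TT (.arr τ1 τ2), ∀ t ∈ TT τ1, F τ1 τ2 ρ t ∈ TT τ2
  F_full : ∀ τ1 τ2 : ETy B, IsT1 (.arr τ1 τ2) → τ1 ≠ .omega →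
    ∀ g : Tm C → Tm C, (∀ t ∈ TT τ1, g t ∈ TT τ2) →
      ∃ ρ ∈ TT (.arr τ1 τ2), ∀ t ∈ TT τ1, F τ1 τ2 ρ t = g t
  F_inj : ∀ τ1 τ2 : ETy B, IsT1 (.arr τ1 τ2) → τ1 ≠ .omega →
    ∀ ρ ∈ TT (.arr τ1 τ2), ∀ ρ' ∈ TT (.arr τ1 τ2),
      (∀ t ∈ TT τ1, F τ1 τ2 ρ t = F τ1 τ2 ρ' t) → ρ = ρ'
  TT_disj : ∀ τ τ' : ETy B, τ ≠ τ' → τ ≠ .omega → τ' ≠ .omega →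
    Disjoint (TT τ) (TT τ')
  prim_notin : ∀ τ : ETy B, τ ≠ .omega →
    Tm.const cXi ∉ TT τ ∧ Tm.const cL ∉ TT τ ∧ ∀ b, Tm.const (cA b) ∉ TT τ
  cover : ∀ c : C, c = cXi ∨ c = cL ∨ (∃ b, c = cA b) ∨
    ∃ τ : ETy B, τ ≠ .omega ∧ Tm.const c ∈ TT τ

namespace CanSys

variable {B : Type} {D : B → Type} (S : CanSys B D)

/-- The term `Ξ`. -/
def XiT : Tm S.C := .const S.cXi

/-- The term `L`. -/
def LT : Tm S.C := .const S.cL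

/-- The term `A_b`. -/
def AT (b : B) : Tm S.C := .const (S.cA b)

/-- `K t = λx.t` with `x ∉ FV(t)`. -/
def Kt (t : Tm S.C) : Tm S.C := .lam t.lift

/-- `H t = L (K t)`. -/
def Ht (t : Tm S.C) : Tm S.C := .app S.LT (S.Kt t)

/-- The term `H = λx. L (K x)`. -/
def Hterm : Tm S.C := .lam (.app S.LT (.lam (.var 1)))

/-- `F t₁ t₂`, written out according to the notational convention:
`λf. Ξ t₁ (λx. t₂ (f x))` if `t₂` is not a λ-abstraction, and
`λf. Ξ t₁ (λx. q₂[z/(f x)])` if `t₂ = λz. q₂`. -/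
def Ft (t1 t2 : Tm S.C) : Tm S.C :=
  .lam (.app (.app S.XiT t1.lift)
    (match t2 with
     | .lam b => .lam (b.bind fun n => match n with
         | 0 => .app (.var 1) (.var 0)
         | m + 1 => .var (m + 2))
     | t2 => .lam (.app t2.lift.lift (.app (.var 1) (.var 0)))))

end CanSys


mutual
  /-- One-step reduction `→_{≤α}` of the reduction system `R_α`: the context
  closure of β- and η-reduction together with the rules `c t → F(c)(ρ₁)` for
  canonical constants `c ∈ Σ_{τ₁→τ₂}` (`τ₁ ≠ ω`) and `t ≻_{<α} ρ₁`. -/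
  inductive Step {B : Type} {D : B → Type} (S : CanSys B D) :
      Ordinal.{0} → Tm S.C → Tm S.C → Prop
    | beta (α : Ordinal.{0}) (t s : Tm S.C) : Step S α (.app (.lam t) s) (t.subst0 s)
    | eta (α : Ordinal.{0}) (t : Tm S.C) : Step S α (.lam (.app t.lift (.var 0))) t
    | crule {α γ : Ordinal.{0}} (hγ : γ < α) {τ1 τ2 : ETy B} (h1 : τ1 ≠ .omega)
        {c : Tm S.C} (hc : c ∈ S.TT (.arr τ1 τ2)) {ρ1 : Tm S.C} (hρ1 : ρ1 ∈ S.TT τ1)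
        {t : Tm S.C} (hs : Succ S γ t ρ1) :
        Step S α (.app c t) (S.F τ1 τ2 c ρ1)
    | appL {α : Ordinal.{0}} {t t' : Tm S.C} (s : Tm S.C) :
        Step S α t t' → Step S α (.app t s) (.app t' s)
    | appR (t : Tm S.C) {α : Ordinal.{0}} {s s' : Tm S.C} :
        Step S α s s' → Step S α (.app t s) (.app t s')
    | lam {α : Ordinal.{0}} {t t' : Tm S.C} :
        Step S α t t' → Step S α (.lam t) (.lam t')

  /-- Many-step reduction `↠_{≤α}` (the reflexive-transitive closure of `→_{≤α}`). -/
  inductive Steps {B : Type} {D : B → Type} (S : CanSys B D) :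
      Ordinal.{0} → Tm S.C → Tm S.C → Prop
    | refl (α : Ordinal.{0}) (t : Tm S.C) : Steps S α t t
    | tail {α : Ordinal.{0}} {t u v : Tm S.C} :
        Steps S α t u → Step S α u v → Steps S α t v

  /-- `t ⇝_α ρ` : `t ↠_{≤α} t' ≻_α ρ` for some `t'`. -/
  inductive Lead {B : Type} {D : B → Type} (S : CanSys B D) :
      Ordinal.{0} → Tm S.C → Tm S.C → Prop
    | mk {α : Ordinal.{0}} {t t' ρ : Tm S.C} :
        Steps S α t t' → Succ S α t' ρ → Lead S α t ρ

  /-- `t ⇝_{<α} ρ` : `t ⇝_γ ρ` for some `γ < α`. -/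
  inductive LeadLt {B : Type} {D : B → Type} (S : CanSys B D) :
      Ordinal.{0} → Tm S.C → Tm S.C → Prop
    | mk {α γ : Ordinal.{0}} {t ρ : Tm S.C} :
        γ < α → Lead S γ t ρ → LeadLt S α t ρ

  /-- The typing relation `t ∼_α τ` (Definition 4.4), by the rules
  (A), (H), (Kω), (Kε), (F) and (Fω). -/
  inductive Sim {B : Type} {D : B → Type} (S : CanSys B D) :
      Ordinal.{0} → Tm S.C → ETy B → Prop
    | ofA (α : Ordinal.{0}) (b : B) : Sim S α (S.AT b) (.base b)
    | ofH (α : Ordinal.{0}) : Sim S α S.Hterm .o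
    | ofKom {α : Ordinal.{0}} {t : Tm S.C} :
        LeadLt S α t S.top → Sim S α (S.Kt t) .omega
    | ofKeps {α : Ordinal.{0}} {t : Tm S.C} :
        LeadLt S α t S.bot → Sim S α (S.Kt t) .eps
    | ofF {α γ1 γ2 : Ordinal.{0}} (h1 : γ1 < α) (h2 : γ2 < α)
        {t1 t2 : Tm S.C} {τ1 τ2 : ETy B} :
        Sim S γ1 t1 τ1 → Sim S γ2 t2 τ2 → Sim S α (S.Ft t1 t2) (arrN τ1 τ2)
    | ofFom {α γ : Ordinal.{0}} (hγ : γ < α) {t1 t2 : Tm S.C} :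
        Sim S γ t1 .eps → Sim S α (S.Ft t1 t2) .omega

  /-- The relation `t ≻_α ρ` between terms and canonical terms (Definition 4.5). -/
  inductive Succ {B : Type} {D : B → Type} (S : CanSys B D) :
      Ordinal.{0} → Tm S.C → Tm S.C → Prop
    /- `ρ ≻_α ρ` for canonical `ρ` -/
    | refl {τ : ETy B} (hτ : τ ≠ .omega) {ρ : Tm S.C} (hρ : ρ ∈ S.TT τ)
        (α : Ordinal.{0}) : Succ S α ρ ρ
    /- `t ≻_α ρ` when `ρ` has canonical type `τ₁→τ₂` (possibly `τ₁ = ω`) and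
       `t t₁ ⇝_{<α} F(ρ)(t₁)` for all `t₁ ∈ T_{τ₁}` -/
    | fn {τ1 τ2 : ETy B} {ρ : Tm S.C} (hρ : ρ ∈ S.TT (.arr τ1 τ2))
        {α : Ordinal.{0}} {t : Tm S.C}
        (h : ∀ t1 ∈ S.TT τ1, LeadLt S α (.app t t1) (S.F τ1 τ2 ρ t1)) :
        Succ S α t ρ
    /- base postulates for `t ≻_α ⊤` -/
    | topLA (α : Ordinal.{0}) (b : B) : Succ S α (.app S.LT (S.AT b)) S.top
    | topLH (α : Ordinal.{0}) : Succ S α (.app S.LT S.Hterm) S.top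
    | topA {b : B} {c : Tm S.C} (hc : c ∈ S.TT (.base b)) (α : Ordinal.{0}) :
        Succ S α (.app (S.AT b) c) S.top
    | topH {c : Tm S.C} (hc : c = S.top ∨ c = S.bot) (α : Ordinal.{0}) :
        Succ S α (S.Ht c) S.top
    /- `(Ξ_i^⊤)` -/
    | xiTop {α : Ordinal.{0}} (hα : 0 < α) {t1 t2 : Tm S.C} {τ : ETy B}
        (h1 : Sim S α t1 τ) (h2 : ∀ t3 ∈ S.TT τ, LeadLt S α (.app t2 t3) S.top) :
        Succ S α (.app (.app S.XiT t1) t2) S.top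
    /- `(Ξ_H^⊤)` -/
    | xiHTop {α : Ordinal.{0}} (hα : 0 < α) {t1 t2 : Tm S.C} {τ : ETy B}
        (h1 : Sim S α t1 τ)
        (h2 : ∀ t3 ∈ S.TT τ, LeadLt S α (S.Ht (.app t2 t3)) S.top) :
        Succ S α (S.Ht (.app (.app S.XiT t1) t2)) S.top
    /- `(F_L^⊤)`, first case: `t₁ ∼_α ε` -/
    | flTopEps {α : Ordinal.{0}} (hα : 0 < α) {t1 t2 : Tm S.C}
        (h1 : Sim S α t1 .eps) :
        Succ S α (.app S.LT (S.Ft t1 t2)) S.top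
    /- `(F_L^⊤)`, second case: `t₁ ∼_α τ` for some `τ ≠ ε` and `L t₂ ⇝_{<α} ⊤` -/
    | flTop {α : Ordinal.{0}} (hα : 0 < α) {t1 t2 : Tm S.C} {τ : ETy B}
        (hτ : τ ≠ .eps) (h1 : Sim S α t1 τ) (h2 : LeadLt S α (.app S.LT t2) S.top) :
        Succ S α (.app S.LT (S.Ft t1 t2)) S.top
    /- `(H_i^⊤)` -/
    | hiTop {α : Ordinal.{0}} (hα : 0 < α) {t1 : Tm S.C} (h : LeadLt S α t1 S.top) :
        Succ S α (S.Ht t1) S.top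
    /- `(Ξ^⊥)` -/
    | xiBot {α : Ordinal.{0}} (hα : 0 < α) {t1 t2 : Tm S.C} {τ : ETy B}
        {γ : Ordinal.{0}} (hγ : γ < α)
        (hH : Succ S γ (S.Ht (.app (.app S.XiT t1) t2)) S.top)
        (h1 : Sim S α t1 τ) {t3 : Tm S.C} (h3 : t3 ∈ S.TT τ)
        (hb : LeadLt S α (.app t2 t3) S.bot) :
        Succ S α (.app (.app S.XiT t1) t2) S.bot
end


variable {B : Type} {D : B → Type}

/-- `t ≻ ρ` : the stable relation `≻_ζ` at the closure ordinal (by monotonicity,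
it equals the union of the `≻_α` over all ordinals `α`). -/
def SuccS (S : CanSys B D) (t ρ : Tm S.C) : Prop := ∃ α : Ordinal.{0}, Succ S α t ρ

/-- `t ∼ τ` : the stable typing relation. -/
def SimS (S : CanSys B D) (t : Tm S.C) (τ : ETy B) : Prop := ∃ α : Ordinal.{0}, Sim S α t τ

/-- One-step reduction of the stable reduction system `R`. -/
def StepR (S : CanSys B D) (t t' : Tm S.C) : Prop := ∃ α : Ordinal.{0}, Step S α t t'

/-- `t ↠_R t'` : many-step reduction in the stable reduction system `R`. -/
def StepsR (S : CanSys B D) : Tm S.C → Tm S.C → Prop := Relation.ReflTransGen (StepR S)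

/-- `t ⇝ ρ` : the stable relation `⇝_ζ`. -/
def LeadR (S : CanSys B D) (t ρ : Tm S.C) : Prop :=
  ∃ t', StepsR S t t' ∧ SuccS S t' ρ

/-- `t =_{≤α} t'` : convertibility in `R_α`. -/
def ConvLe (S : CanSys B D) (α : Ordinal.{0}) : Tm S.C → Tm S.C → Prop :=
  Relation.EqvGen (Step S α)

/-- `t =_R t'` : convertibility in the stable reduction system `R`. -/
def ConvR (S : CanSys B D) : Tm S.C → Tm S.C → Prop :=
  Relation.EqvGen (StepR S)

/-- Filling the boxes `□₁, …, □ₖ` of a `k`-ary context (a λ-term over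
`Σ⁺ ∪ {□₁, …, □ₖ}`) with terms, in such a way that the free variables of the
inserted terms do not become bound. -/
def fillk {C : Type} {k : Nat} (ts : Fin k → Tm C) : Tm (Fin k ⊕ C) → Tm C
  | .var n => .var n
  | .const (.inl i) => ts i
  | .const (.inr c) => .const c
  | .app a b => .app (fillk ts a) (fillk ts b)
  | .lam a => .lam (fillk (fun i => (ts i).lift) a)

/-- Filling a unary context. -/
def fill1 {C : Type} (Ctx : Tm (Fin 1 ⊕ C)) (t : Tm C) : Tm C :=
  fillk (fun _ => t) Ctx

/-- `t ≫^n t'` (at the stable level): there are a `k`-ary context `Cx`, terms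
`t₁, …, t_k` and canonical terms `ρ₁, …, ρ_k` of ranks `≤ n` with `tᵢ ≻ ρᵢ`,
`t = Cx[t₁,…,t_k]` and `t' = Cx[ρ₁,…,ρ_k]`. -/
def Gg (S : CanSys B D) (n : Nat) (t t' : Tm S.C) : Prop :=
  ∃ (k : Nat) (Cx : Tm (Fin k ⊕ S.C)) (ts ρs : Fin k → Tm S.C),
    (∀ i, SuccS S (ts i) (ρs i)) ∧
    (∀ i, ∃ τ : ETy B, τ ≠ .omega ∧ ρs i ∈ S.TT τ ∧ rank τ ≤ n) ∧
    t = fillk ts Cx ∧ t' = fillk ρs Cx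



/-! ### Auxiliary infrastructure for the proof of Lemma 4.8 -/

section TmLemmas

variable {CC : Type}

theorem Tm.rename_rename : ∀ (t : Tm CC) (f g : Nat → Nat),
    (t.rename f).rename g = t.rename (fun n => g (f n))
  | .var n, f, g => rfl
  | .const c, f, g => rfl
  | .app a b, f, g => by
      simp only [Tm.rename, Tm.rename_rename]
  | .lam a, f, g => by
      simp only [Tm.rename, Tm.rename_rename]
      exact congrArg Tm.lam (congrFun (congrArg Tm.rename (by funext n; cases n <;> rfl)) a)

theorem Tm.bind_rename : ∀ (t : Tm CC) (f : Nat → Nat) (σ : Nat → Tm CC),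
    (t.rename f).bind σ = t.bind (fun n => σ (f n))
  | .var n, f, σ => rfl
  | .const c, f, σ => rfl
  | .app a b, f, σ => by
      simp only [Tm.rename, Tm.bind, Tm.bind_rename]
  | .lam a, f, σ => by
      simp only [Tm.rename, Tm.bind, Tm.bind_rename]
      exact congrArg Tm.lam (congrFun (congrArg Tm.bind (by funext n; cases n <;> rfl)) a)

theorem Tm.rename_bind : ∀ (t : Tm CC) (σ : Nat → Tm CC) (f : Nat → Nat),
    (t.bind σ).rename f = t.bind (fun n => (σ n).rename f)
  | .var n, σ, f => rfl
  | .const c, σ, f => rfl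
  | .app a b, σ, f => by
      simp only [Tm.rename, Tm.bind, Tm.rename_bind]
  | .lam a, σ, f => by
      simp only [Tm.rename, Tm.bind, Tm.rename_bind]
      refine congrArg Tm.lam (congrFun (congrArg Tm.bind ?_) a)
      funext n
      cases n with
      | zero => rfl
      | succ m =>
        show ((σ m).lift).rename _ = ((σ m).rename f).lift
        simp only [Tm.lift, Tm.rename_rename]

theorem Tm.bind_var (t : Tm CC) : t.bind (fun n => .var n) = t := by
  induction t with
  | var n => rfl
  | const c => rfl
  | app a b iha ihb => simp only [Tm.bind, iha, ihb]
  | lam a iha =>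
      simp only [Tm.bind]
      rw [show (fun n => match n with | 0 => (.var 0 : Tm CC) | m + 1 => (Tm.var m).lift)
            = (fun n => (.var n : Tm CC)) from by funext n; cases n <;> rfl, iha]

theorem Tm.rename_as_bind : ∀ (t : Tm CC) (f : Nat → Nat),
    t.rename f = t.bind (fun n => .var (f n))
  | .var n, f => rfl
  | .const c, f => rfl
  | .app a b, f => by
      simp only [Tm.rename, Tm.bind, Tm.rename_as_bind]
  | .lam a, f => by
      simp only [Tm.rename, Tm.bind, Tm.rename_as_bind]
      exact congrArg Tm.lam (congrFun (congrArg Tm.bind (by funext n; cases n <;> rfl)) a)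

@[simp] theorem Tm.lift_var (n : Nat) : (Tm.var n : Tm CC).lift = .var (n + 1) := rfl
@[simp] theorem Tm.lift_const (c : CC) : (Tm.const c : Tm CC).lift = .const c := rfl
@[simp] theorem Tm.lift_app (a b : Tm CC) : (Tm.app a b).lift = .app a.lift b.lift := rfl

theorem Tm.bind_lift (t : Tm CC) : t.bind (fun m => .var (m + 1)) = t.lift :=
  (Tm.rename_as_bind t _).symm

theorem Tm.bind_lift2 (t : Tm CC) : t.bind (fun m => .var (m + 2)) = t.lift.lift := by
  rw [Tm.lift, Tm.lift, Tm.rename_rename, Tm.rename_as_bind]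

theorem Tm.lift_bind_up (t : Tm CC) (σ : Nat → Tm CC) :
    (t.bind σ).lift = t.lift.bind
      (fun n => match n with | 0 => .var 0 | m + 1 => (σ m).lift) := by
  rw [Tm.lift, Tm.lift, Tm.rename_bind, Tm.bind_rename]
  exact congrFun (congrArg Tm.bind (by funext n; rfl)) t

theorem Tm.lift_eq_var {t : Tm CC} {k : Nat} (h : t.lift = .var (k + 1)) : t = .var k := by
  cases t with
  | var j => cases h; rfl
  | const c => cases h
  | app a b => cases h
  | lam a => cases h

theorem Tm.lift_eq_const {t : Tm CC} {c : CC} (h : t.lift = .const c) : t = .const c := by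
  cases t with
  | var j => cases h
  | const c' => cases h; rfl
  | app a b => cases h
  | lam a => cases h

theorem Tm.lift_eq_lam {t : Tm CC} {b : Tm CC} (h : t.lift = .lam b) : ∃ b0, t = .lam b0 := by
  cases t with
  | var j => cases h
  | const c' => cases h
  | app a b => cases h
  | lam a => exact ⟨a, rfl⟩

theorem Tm.lift_is_var {t : Tm CC} {k : Nat} (h : t.lift = .var k) : ∃ j, t = .var j := by
  cases t with
  | var j => exact ⟨j, rfl⟩
  | const c' => cases h
  | app a b => cases h
  | lam a => cases h

end TmLemmas

section FillLemmas

variable {CC : Type}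

@[simp] theorem fill1_var (n : Nat) (s : Tm CC) : fill1 (.var n) s = .var n := rfl
@[simp] theorem fill1_box (i : Fin 1) (s : Tm CC) : fill1 (.const (.inl i)) s = s := rfl
@[simp] theorem fill1_const (c : CC) (s : Tm CC) : fill1 (.const (.inr c)) s = .const c := rfl
@[simp] theorem fill1_app (a b : Tm (Fin 1 ⊕ CC)) (s : Tm CC) :
    fill1 (.app a b) s = .app (fill1 a s) (fill1 b s) := rfl
@[simp] theorem fill1_lam (a : Tm (Fin 1 ⊕ CC)) (s : Tm CC) :
    fill1 (.lam a) s = .lam (fill1 a s.lift) := rfl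

/-- Embedding of a term as a box-free context. -/
def embedC : Tm CC → Tm (Fin 1 ⊕ CC)
  | .var n => .var n
  | .const c => .const (.inr c)
  | .app a b => .app (embedC a) (embedC b)
  | .lam a => .lam (embedC a)

@[simp] theorem fill1_embed : ∀ (u : Tm CC) (s : Tm CC), fill1 (embedC u) s = u
  | .var n, s => rfl
  | .const c, s => rfl
  | .app a b, s => by simp [embedC, fill1_embed]
  | .lam a, s => by simp [embedC, fill1_embed]

/-- `ClosedAt d t` : every free variable of `t` is `< d`. -/
def ClosedAt : Nat → Tm CC → Prop
  | d, .var n => n < d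
  | _, .const _ => True
  | d, .app a b => ClosedAt d a ∧ ClosedAt d b
  | d, .lam a => ClosedAt (d + 1) a

theorem closedAt_rename : ∀ (t : Tm CC) (d e : Nat) (f : Nat → Nat),
    (∀ m, m < d → f m < e) → ClosedAt d t → ClosedAt e (t.rename f)
  | .var n, d, e, f, hf, h => hf n h
  | .const c, d, e, f, hf, h => trivial
  | .app a b, d, e, f, hf, h =>
      ⟨closedAt_rename a d e f hf h.1, closedAt_rename b d e f hf h.2⟩
  | .lam a, d, e, f, hf, h => by
      refine closedAt_rename a (d+1) (e+1) _ ?_ h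
      intro m hm
      cases m with
      | zero => exact Nat.succ_pos e
      | succ k => exact Nat.succ_lt_succ (hf k (Nat.lt_of_succ_lt_succ hm))

theorem closedAt_lift {t : Tm CC} {d : Nat} (h : ClosedAt d t) : ClosedAt (d + 1) t.lift :=
  closedAt_rename t d (d+1) _ (fun m hm => Nat.succ_lt_succ hm) h

/-- If the filling of `Cx` with a variable `≥ d` is closed below `d`,
then `Cx` is box-free: all fillings agree. -/
theorem fill1_closed : ∀ (Cx : Tm (Fin 1 ⊕ CC)) (d n : Nat), d ≤ n →
    ClosedAt d (fill1 Cx (.var n)) → ∀ s, fill1 Cx s = fill1 Cx (.var n)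
  | .var k, d, n, hdn, h, s => rfl
  | .const (.inl i), d, n, hdn, h, s => by
      exact absurd h (by simp [ClosedAt]; omega)
  | .const (.inr c), d, n, hdn, h, s => rfl
  | .app a b, d, n, hdn, h, s => by
      simp only [fill1_app] at h ⊢
      rw [fill1_closed a d n hdn h.1 s, fill1_closed b d n hdn h.2 s]
  | .lam a, d, n, hdn, h, s => by
      simp only [fill1_lam, Tm.lift_var] at h ⊢
      rw [fill1_closed a (d+1) (n+1) (Nat.succ_le_succ hdn) h s.lift]

theorem fill1_eq_app {Cx : Tm (Fin 1 ⊕ CC)} {x : Nat} {a b : Tm CC}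
    (h : fill1 Cx (.var x) = .app a b) :
    ∃ C1 C2, Cx = .app C1 C2 ∧ fill1 C1 (.var x) = a ∧ fill1 C2 (.var x) = b := by
  cases Cx with
  | var n => cases h
  | const cc => rcases cc with i | c <;> cases h
  | app C1 C2 =>
      simp only [fill1_app] at h
      exact ⟨C1, C2, rfl, (Tm.app.injEq _ _ _ _ ▸ h).1, (Tm.app.injEq _ _ _ _ ▸ h).2⟩
  | lam a => cases h

theorem fill1_eq_lam {Cx : Tm (Fin 1 ⊕ CC)} {x : Nat} {a : Tm CC}
    (h : fill1 Cx (.var x) = .lam a) :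
    ∃ C1, Cx = .lam C1 ∧ fill1 C1 (.var (x + 1)) = a := by
  cases Cx with
  | var n => cases h
  | const cc => rcases cc with i | c <;> cases h
  | app C1 C2 => cases h
  | lam C1 =>
      simp only [fill1_lam, Tm.lift_var] at h
      exact ⟨C1, rfl, Tm.lam.inj h⟩

theorem fill1_eq_const {Cx : Tm (Fin 1 ⊕ CC)} {x : Nat} {c : CC}
    (h : fill1 Cx (.var x) = .const c) : ∀ s, fill1 Cx s = .const c := by
  intro s
  rw [fill1_closed Cx 0 x (Nat.zero_le x) (by rw [h]; trivial) s, h]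

theorem fill1_rename : ∀ (Cx : Tm (Fin 1 ⊕ CC)) (f : Nat → Nat) (s : Tm CC),
    fill1 (Cx.rename f) (s.rename f) = (fill1 Cx s).rename f
  | .var n, f, s => rfl
  | .const (.inl i), f, s => rfl
  | .const (.inr c), f, s => rfl
  | .app a b, f, s => by
      simp only [Tm.rename, fill1_app, fill1_rename]
      try rfl
  | .lam a, f, s => by
      simp only [Tm.rename, fill1_lam]
      rw [show (s.rename f).lift = s.lift.rename
            (fun n => match n with | 0 => 0 | m + 1 => f m + 1) from by
          simp only [Tm.lift, Tm.rename_rename],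
        fill1_rename a _ s.lift]
      try rfl

end FillLemmas

section BindInv

variable {CC : Type}

/-- The "up" operation on substitutions, matching the `lam` case of `Tm.bind`. -/
def upS (σ : Nat → Tm CC) : Nat → Tm CC :=
  fun n => match n with | 0 => .var 0 | m + 1 => (σ m).lift

@[simp] theorem Tm.bind_lam (a : Tm CC) (σ : Nat → Tm CC) :
    (Tm.lam a).bind σ = .lam (a.bind (upS σ)) := rfl

theorem Tm.lift_bind_upS (t : Tm CC) (σ : Nat → Tm CC) :
    (t.bind σ).lift = t.lift.bind (upS σ) := Tm.lift_bind_up t σ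

/-- Inversion of filling against a substituted term. -/
theorem bind_inv : ∀ (Cx : Tm (Fin 1 ⊕ CC)) (σ : Nat → Tm CC) (x n : Nat),
    σ x = .var n →
    (∀ m, σ m = .var n → m = x) →
    (∀ m, (∀ k, σ m ≠ .var k) →
      ClosedAt n (σ m) ∧ (∀ c, σ m ≠ .const c) ∧ (∀ b, σ m ≠ .lam b)) →
    ∀ u : Tm CC, fill1 Cx (.var n) = u.bind σ →
    ∃ C0 : Tm (Fin 1 ⊕ CC), fill1 C0 (.var x) = u ∧
      ∀ s, fill1 Cx (s.bind σ) = (fill1 C0 s).bind σ := by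
  intro Cx
  induction Cx with
  | var k =>
      intro σ x n hx hinj hshape u h
      cases u with
      | var m =>
          refine ⟨.var m, rfl, fun s => ?_⟩
          simp only [fill1_var, Tm.bind] at h ⊢
          exact h
      | const c => cases h
      | app a b => cases h
      | lam a => cases h
  | const cc =>
      rcases cc with i | c
      · intro σ x n hx hinj hshape u h
        cases u with
        | var m =>
            simp only [fill1_box, Tm.bind] at h
            have hm : m = x := hinj m h.symm
            subst hm
            exact ⟨.const (.inl i), rfl, fun s => rfl⟩
        | const c => cases h
        | app a b => cases h
        | lam a => cases h
      · intro σ x n hx hinj hshape u h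
        cases u with
        | var m =>
            simp only [fill1_const, Tm.bind] at h
            have hv : ∀ k, σ m ≠ .var k := by
              intro k hk; rw [hk] at h; cases h
            exact absurd h.symm ((hshape m hv).2.1 c)
        | const c' =>
            simp only [fill1_const, Tm.bind] at h
            cases h
            exact ⟨.const (.inr c), rfl, fun s => rfl⟩
        | app a b => cases h
        | lam a => cases h
  | app C1 C2 ih1 ih2 =>
      intro σ x n hx hinj hshape u h
      cases u with
      | var m =>
          simp only [fill1_app, Tm.bind] at h
          have hv : ∀ k, σ m ≠ .var k := by
            intro k hk; rw [hk] at h; cases h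
          have hcl : ClosedAt n (σ m) := (hshape m hv).1
          refine ⟨.var m, rfl, fun s => ?_⟩
          have := fill1_closed (.app C1 C2) n n (Nat.le_refl n)
            (by simp only [fill1_app]; rw [h]; exact hcl) (s.bind σ)
          rw [this]
          simp only [fill1_app, fill1_var, Tm.bind]
          exact h
      | const c => cases h
      | app u1 u2 =>
          simp only [fill1_app, Tm.bind] at h
          obtain ⟨h1, h2⟩ := Tm.app.inj h
          obtain ⟨D1, hD1, hs1⟩ := ih1 σ x n hx hinj hshape u1 h1
          obtain ⟨D2, hD2, hs2⟩ := ih2 σ x n hx hinj hshape u2 h2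
          refine ⟨.app D1 D2, ?_, fun s => ?_⟩
          · simp [hD1, hD2]
          · simp only [fill1_app, Tm.bind, hs1 s, hs2 s]; try rfl
      | lam a => cases h
  | lam C' ih =>
      intro σ x n hx hinj hshape u h
      cases u with
      | var m =>
          simp only [fill1_lam, Tm.bind] at h
          have hv : ∀ k, σ m ≠ .var k := by
            intro k hk; rw [hk] at h; cases h
          exact absurd h.symm ((hshape m hv).2.2 _)
      | const c => cases h
      | app a b => cases h
      | lam u0 =>
          simp only [fill1_lam, Tm.lift_var, Tm.bind_lam] at h
          have h' := Tm.lam.inj h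
          have hx' : upS σ (x + 1) = .var (n + 1) := by
            show (σ x).lift = _
            rw [hx]; rfl
          have hinj' : ∀ m, upS σ m = .var (n + 1) → m = x + 1 := by
            intro m hm
            cases m with
            | zero => cases hm
            | succ k =>
                have : σ k = .var n := Tm.lift_eq_var hm
                rw [hinj k this]
          have hshape' : ∀ m, (∀ k, upS σ m ≠ .var k) →
              ClosedAt (n + 1) (upS σ m) ∧ (∀ c, upS σ m ≠ .const c) ∧
                (∀ b, upS σ m ≠ .lam b) := by
            intro m hv
            cases m with
            | zero => exact absurd rfl (hv 0)
            | succ k =>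
                have hvk : ∀ j, σ k ≠ .var j := by
                  intro j hj
                  exact hv (j + 1) (by show (σ k).lift = _; rw [hj]; rfl)
                obtain ⟨hc, hnc, hnl⟩ := hshape k hvk
                refine ⟨closedAt_lift hc, ?_, ?_⟩
                · intro c hcc
                  exact hnc c (Tm.lift_eq_const hcc)
                · intro b hbb
                  obtain ⟨b0, hb0⟩ := Tm.lift_eq_lam hbb
                  exact hnl b0 hb0
          obtain ⟨D, hD, hs⟩ := ih (upS σ) (x + 1) (n + 1) hx' hinj' hshape' u0 h'
          refine ⟨.lam D, ?_, fun s => ?_⟩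
          · simp only [fill1_lam, Tm.lift_var, hD]
          · simp only [fill1_lam, Tm.bind_lam]
            have heq : (s.bind σ).lift = s.lift.bind (upS σ) := Tm.lift_bind_upS s σ
            rw [heq]
            exact congrArg Tm.lam (hs s.lift)

/-- Specialization: inversion through a single lift. -/
theorem bind_inv_lift (Cx : Tm (Fin 1 ⊕ CC)) (x : Nat) (u : Tm CC)
    (h : fill1 Cx (.var (x + 1)) = u.lift) :
    ∃ C0, fill1 C0 (.var x) = u ∧ ∀ s, fill1 Cx s.lift = (fill1 C0 s).lift := by
  obtain ⟨C0, h1, h2⟩ := bind_inv Cx (fun m => .var (m + 1)) x (x + 1) rfl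
    (fun m hm => by cases hm; rfl)
    (fun m hv => absurd rfl (hv (m + 1)))
    u (by rw [h, ← Tm.bind_lift])
  refine ⟨C0, h1, fun s => ?_⟩
  have := h2 s
  rwa [Tm.bind_lift, Tm.bind_lift] at this

/-- Specialization: inversion through a double lift. -/
theorem bind_inv_lift2 (Cx : Tm (Fin 1 ⊕ CC)) (x : Nat) (u : Tm CC)
    (h : fill1 Cx (.var (x + 2)) = u.lift.lift) :
    ∃ C0, fill1 C0 (.var x) = u ∧ ∀ s, fill1 Cx s.lift.lift = (fill1 C0 s).lift.lift := by
  obtain ⟨C0, h1, h2⟩ := bind_inv Cx (fun m => .var (m + 2)) x (x + 2) rfl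
    (fun m hm => by cases hm; rfl)
    (fun m hv => absurd rfl (hv (m + 2)))
    u (by rw [h, ← Tm.bind_lift2])
  refine ⟨C0, h1, fun s => ?_⟩
  have := h2 s
  rwa [Tm.bind_lift2, Tm.bind_lift2] at this

/-- The substitution used in the `λ`-branch of the notational convention `F t₁ t₂`. -/
def sF : Nat → Tm CC :=
  fun n => match n with | 0 => .app (.var 1) (.var 0) | m + 1 => .var (m + 2)

theorem Tm.lift_bind_sF (t : Tm CC) : t.lift.bind sF = t.lift.lift := by
  rw [← Tm.bind_lift2, Tm.lift, Tm.bind_rename]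
  exact congrFun (congrArg Tm.bind (funext fun n => rfl)) t

/-- Specialization: inversion through the substitution `sF`. -/
theorem bind_inv_sF (Cx : Tm (Fin 1 ⊕ CC)) (x : Nat) (u : Tm CC)
    (h : fill1 Cx (.var (x + 2)) = u.bind sF) :
    ∃ C0, fill1 C0 (.var (x + 1)) = u ∧
      ∀ s, fill1 Cx (s.bind sF) = (fill1 C0 s).bind sF := by
  refine bind_inv Cx sF (x + 1) (x + 2) rfl ?_ ?_ u h
  · intro m hm
    cases m with
    | zero => cases hm
    | succ k => cases hm; rfl
  · intro m hv
    cases m with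
    | zero =>
        refine ⟨⟨?_, ?_⟩, ?_, ?_⟩
        · show 1 < x + 2; omega
        · show 0 < x + 2; omega
        · intro c hc; cases hc
        · intro b hb; cases hb
    | succ k => exact absurd rfl (hv (k + 2))

/-- Filling commutes with substitution (general form). -/
theorem fill1_bind : ∀ (CA : Tm (Fin 1 ⊕ CC)) (σc : Nat → Tm (Fin 1 ⊕ CC))
    (σ : Nat → Tm CC) (s s' : Tm CC),
    (∀ m, fill1 (σc m) s = σ m) → s'.bind σ = s →
    fill1 (CA.bind σc) s = (fill1 CA s').bind σ
  | .var m, σc, σ, s, s', hm, hs' => by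
      simp only [Tm.bind, fill1_var]
      exact (hm m).symm ▸ rfl
  | .const (.inl i), σc, σ, s, s', hm, hs' => by
      simp only [Tm.bind, fill1_box]
      exact hs'.symm
  | .const (.inr c), σc, σ, s, s', hm, hs' => rfl
  | .app a b, σc, σ, s, s', hm, hs' => by
      simp only [Tm.bind, fill1_app]
      rw [fill1_bind a σc σ s s' hm hs', fill1_bind b σc σ s s' hm hs']
      try rfl
  | .lam a, σc, σ, s, s', hm, hs' => by
      simp only [Tm.bind_lam, fill1_lam]
      have hm' : ∀ m, fill1 (upS σc m) s.lift = upS σ m := by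
        intro m
        cases m with
        | zero => rfl
        | succ k =>
            show fill1 ((σc k).lift) s.lift = (σ k).lift
            rw [Tm.lift, Tm.lift, fill1_rename, hm k]
            rfl
      have hs'' : s'.lift.bind (upS σ) = s.lift := by
        rw [← Tm.lift_bind_upS, hs']
      exact congrArg Tm.lam (fill1_bind a (upS σc) (upS σ) s.lift s'.lift hm' hs'')

/-- Filling commutes with `subst0` (β-contraction). -/
theorem fill1_subst0 (CA CB : Tm (Fin 1 ⊕ CC)) (s : Tm CC) :
    fill1 (CA.subst0 CB) s = (fill1 CA s.lift).subst0 (fill1 CB s) := by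
  refine fill1_bind CA _ _ s s.lift ?_ ?_
  · intro m
    cases m with
    | zero => rfl
    | succ k => rfl
  · show s.lift.bind _ = s
    rw [Tm.lift, Tm.bind_rename]
    exact Tm.bind_var s

end BindInv

section CanLemmas

variable {B : Type} {D : B → Type} (S : CanSys B D)

theorem not_isT1_omega : ¬ IsT1 (.omega : ETy B) := by intro h; cases h

/-- Canonical terms of type `≠ ω` are constants or λ-abstractions of canonical terms. -/
theorem TT_shape {τ : ETy B} (hτ : τ ≠ .omega) {ρ : Tm S.C} (hρ : ρ ∈ S.TT τ) :
    (∃ c, ρ = .const c) ∨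
      (∃ ρ' τ2, ρ = .lam ρ' ∧ ρ' ∈ S.TT τ2 ∧ τ2 ≠ .omega) := by
  by_cases hT1 : IsT1 τ
  · cases hT1 with
    | o => exact Or.inl (S.TT_const .o IsT1.o (fun τ2 h => by cases h) ρ hρ)
    | base b => exact Or.inl (S.TT_const _ (IsT1.base b) (fun τ2 h => by cases h) ρ hρ)
    | @arr τ1 τ2 h1 h2 =>
        refine Or.inl (S.TT_const _ (IsT1.arr h1 h2) (fun τ2' h => ?_) ρ hρ)
        cases h
        exact not_isT1_omega h1
    | @omegaArr τ2 h2 =>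
        rw [S.TT_omega_arr τ2 h2] at hρ
        obtain ⟨ρ', hρ', heq⟩ := hρ
        exact Or.inr ⟨ρ', τ2, heq.symm, hρ',
          fun h => not_isT1_omega (h ▸ h2)⟩
  · rw [S.TT_invalid τ hT1 hτ] at hρ
    exact absurd hρ (Set.notMem_empty ρ)

/-- Canonical terms of type `≠ ω` are closed (indeed contain no variables at all). -/
theorem canon_closed : ∀ (ρ : Tm S.C) (τ : ETy B), τ ≠ .omega → ρ ∈ S.TT τ →
    ∀ d, ClosedAt d ρ
  | .var n, τ, hτ, hρ, d => by
      rcases TT_shape S hτ hρ with ⟨c, hc⟩ | ⟨ρ', τ2, hc, _, _⟩ <;> cases hc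
  | .const c, τ, hτ, hρ, d => trivial
  | .app a b, τ, hτ, hρ, d => by
      rcases TT_shape S hτ hρ with ⟨c, hc⟩ | ⟨ρ', τ2, hc, _, _⟩ <;> cases hc
  | .lam a, τ, hτ, hρ, d => by
      rcases TT_shape S hτ hρ with ⟨c, hc⟩ | ⟨ρ', τ2, hc, hρ', hτ2⟩
      · cases hc
      · cases hc
        exact canon_closed a τ2 hτ2 hρ' (d + 1)

theorem top_is_const : ∃ c, S.top = .const c :=
  S.TT_const .o IsT1.o (fun τ2 h => by cases h) S.top (by rw [S.TT_o]; exact Or.inl rfl)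

theorem bot_is_const : ∃ c, S.bot = .const c :=
  S.TT_const .o IsT1.o (fun τ2 h => by cases h) S.bot (by rw [S.TT_o]; exact Or.inr rfl)

/-- The subject of a typing judgement is `A_b` or a λ-abstraction. -/
theorem Sim_nonlam {α : Ordinal.{0}} {t : Tm S.C} {τ : ETy B}
    (h : Sim S α t τ) (hn : ∀ b, t ≠ .lam b) : ∃ b, t = S.AT b ∧ τ = .base b := by
  cases h with
  | ofA α b => exact ⟨b, rfl, rfl⟩
  | ofH α => exact absurd rfl (hn _)
  | ofKom _ => exact absurd rfl (hn _)
  | ofKeps _ => exact absurd rfl (hn _)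
  | ofF _ _ _ _ => exact absurd rfl (hn _)
  | ofFom _ _ => exact absurd rfl (hn _)

/-- Unfolding lemmas for the notational convention `F t₁ t₂`. -/
theorem Ft_lam (t1 b : Tm S.C) :
    S.Ft t1 (.lam b) = .lam (.app (.app S.XiT t1.lift) (.lam (b.bind sF))) := rfl

theorem Ft_var (t1 : Tm S.C) (m : Nat) :
    S.Ft t1 (.var m) = .lam (.app (.app S.XiT t1.lift)
      (.lam (.app (Tm.var m).lift.lift (.app (.var 1) (.var 0))))) := rfl

theorem Ft_const (t1 : Tm S.C) (c : S.C) :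
    S.Ft t1 (.const c) = .lam (.app (.app S.XiT t1.lift)
      (.lam (.app (Tm.const c).lift.lift (.app (.var 1) (.var 0))))) := rfl

theorem Ft_app (t1 a b : Tm S.C) :
    S.Ft t1 (.app a b) = .lam (.app (.app S.XiT t1.lift)
      (.lam (.app (Tm.app a b).lift.lift (.app (.var 1) (.var 0))))) := rfl

/-- The key η-identity: the two branches of the convention agree on η-expansions. -/
theorem Ft_eta (t1 w : Tm S.C) :
    S.Ft t1 (.lam (.app w.lift (.var 0))) = .lam (.app (.app S.XiT t1.lift)
      (.lam (.app w.lift.lift (.app (.var 1) (.var 0))))) := by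
  rw [Ft_lam]
  show Tm.lam (.app (.app S.XiT t1.lift) (.lam (.app (w.lift.bind sF) (.app (.var 1) (.var 0))))) = _
  rw [Tm.lift_bind_sF]

theorem Ht_eq (u : Tm S.C) : S.Ht u = .app S.LT (.lam u.lift) := rfl

end CanLemmas

section DecLemmas

variable {B : Type} {D : B → Type} (S : CanSys B D)

/-- Decomposition of a context filling to `K u = λ.u↑`. -/
theorem Kt_dec {Cx : Tm (Fin 1 ⊕ S.C)} {x : Nat} {u : Tm S.C}
    (h : fill1 Cx (.var x) = S.Kt u) :
    ∃ C0, fill1 C0 (.var x) = u ∧ ∀ s, fill1 Cx s = S.Kt (fill1 C0 s) := by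
  obtain ⟨C1, hC1, h1⟩ := fill1_eq_lam h
  obtain ⟨C0, h0, hs⟩ := bind_inv_lift C1 x u h1
  subst hC1
  refine ⟨C0, h0, fun s => ?_⟩
  simp only [fill1_lam, hs s]
  rfl

/-- Decomposition of a context filling to `H u = L (K u)`. -/
theorem Ht_dec {Cx : Tm (Fin 1 ⊕ S.C)} {x : Nat} {u : Tm S.C}
    (h : fill1 Cx (.var x) = S.Ht u) :
    ∃ C0, fill1 C0 (.var x) = u ∧ ∀ s, fill1 Cx s = S.Ht (fill1 C0 s) := by
  rw [Ht_eq] at h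
  obtain ⟨CL, CK, hCx, hL, hK⟩ := fill1_eq_app h
  obtain ⟨Cin, hCK, hin⟩ := fill1_eq_lam hK
  obtain ⟨C0, h0, hs⟩ := bind_inv_lift Cin x u hin
  subst hCx; subst hCK
  refine ⟨C0, h0, fun s => ?_⟩
  simp only [fill1_app, fill1_lam, hs s, fill1_eq_const hL s]
  rfl

/-- A context producing `H ∘ (fill of E)`. -/
def HtC (E : Tm (Fin 1 ⊕ S.C)) : Tm (Fin 1 ⊕ S.C) :=
  .app (.const (.inr S.cL)) (.lam (E.rename (· + 1)))

theorem fill1_HtC (E : Tm (Fin 1 ⊕ S.C)) (s : Tm S.C) :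
    fill1 (HtC S E) s = S.Ht (fill1 E s) := by
  simp only [HtC, fill1_app, fill1_const, fill1_lam]
  rw [show s.lift = s.rename (· + 1) from rfl, fill1_rename]
  rfl

/-- Decomposition of a context filling to `F t₁ t₂`. -/
theorem Ft_dec {Cx : Tm (Fin 1 ⊕ S.C)} {x : Nat} {t1 t2 : Tm S.C}
    (h : fill1 Cx (.var x) = S.Ft t1 t2) :
    ∃ C1 C2 : Tm (Fin 1 ⊕ S.C), fill1 C1 (.var x) = t1 ∧
      (∀ s, fill1 Cx s = S.Ft (fill1 C1 s) (fill1 C2 s)) ∧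
      (fill1 C2 (.var x) = t2 ∨
        ∃ C0, fill1 C0 (.var x) = t2 ∧ (∀ c, t2 ≠ .const c) ∧ (∀ b, t2 ≠ .lam b) ∧
          ∀ s, fill1 C2 s = .lam (.app (fill1 C0 s).lift (.var 0))) := by
  have hXi : S.XiT = .const S.cXi := rfl
  cases t2 with
  | lam b =>
      rw [Ft_lam] at h
      obtain ⟨Cb, hCx, hb⟩ := fill1_eq_lam h
      obtain ⟨CA, CM, hCb, hA, hM⟩ := fill1_eq_app hb
      obtain ⟨CXi, C1', hCA, hXi', h1⟩ := fill1_eq_app hA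
      rw [hXi] at hXi'
      obtain ⟨C1, h1', hs1⟩ := bind_inv_lift C1' x t1 h1
      obtain ⟨CM', hCM, hM'⟩ := fill1_eq_lam hM
      obtain ⟨Cb0, hb0, hsb⟩ := bind_inv_sF CM' x b hM'
      subst hCx; subst hCb; subst hCA; subst hCM
      refine ⟨C1, .lam Cb0, h1', fun s => ?_, Or.inl ?_⟩
      · simp only [fill1_lam, fill1_app, fill1_eq_const hXi' s.lift, hs1 s]
        have h2 : fill1 CM' s.lift.lift = (fill1 Cb0 s.lift).bind sF := by
          have := hsb s.lift
          rwa [Tm.lift_bind_sF] at this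
        rw [h2, Ft_lam]
        rfl
      · simp only [fill1_lam, Tm.lift_var, hb0]
  | var m =>
      rw [Ft_var] at h
      obtain ⟨Cb, hCx, hb⟩ := fill1_eq_lam h
      obtain ⟨CA, CM, hCb, hA, hM⟩ := fill1_eq_app hb
      obtain ⟨CXi, C1', hCA, hXi', h1⟩ := fill1_eq_app hA
      rw [hXi] at hXi'
      obtain ⟨C1, h1', hs1⟩ := bind_inv_lift C1' x t1 h1
      obtain ⟨CM', hCM, hM'⟩ := fill1_eq_lam hM
      obtain ⟨C2', Cv, hCM', h2, hv⟩ := fill1_eq_app hM'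
      obtain ⟨C0, h0, hs0⟩ := bind_inv_lift2 C2' x (.var m) h2
      have hvv : ∀ s, fill1 Cv s = .app (.var 1) (.var 0) := by
        intro s
        rw [fill1_closed Cv 2 (x + 2) (by omega)
          (by rw [hv]; exact ⟨show 1 < 2 by omega, show 0 < 2 by omega⟩) s, hv]
      subst hCx; subst hCb; subst hCA; subst hCM; subst hCM'
      have hE : ∀ s' : Tm S.C, fill1 (Tm.lam (.app (C0.rename (· + 1)) (.var 0))) s'
          = .lam (.app (fill1 C0 s').lift (.var 0)) := by
        intro s'
        simp only [fill1_lam, fill1_app, fill1_var]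
        rw [show s'.lift = s'.rename (· + 1) from rfl, fill1_rename]
        try rfl
      refine ⟨C1, .lam (.app (C0.rename (· + 1)) (.var 0)), h1', fun s => ?_, Or.inr
        ⟨C0, h0, fun c hc => Tm.noConfusion rfl (heq_of_eq hc), fun b' hb' => Tm.noConfusion rfl (heq_of_eq hb'), hE⟩⟩
      rw [hE s, Ft_eta]
      simp only [fill1_lam, fill1_app, fill1_eq_const hXi' s.lift, hs1 s, hvv, hs0 s]
      try rfl
  | const c =>
      rw [Ft_const] at h
      obtain ⟨Cb, hCx, hb⟩ := fill1_eq_lam h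
      obtain ⟨CA, CM, hCb, hA, hM⟩ := fill1_eq_app hb
      obtain ⟨CXi, C1', hCA, hXi', h1⟩ := fill1_eq_app hA
      rw [hXi] at hXi'
      obtain ⟨C1, h1', hs1⟩ := bind_inv_lift C1' x t1 h1
      obtain ⟨CM', hCM, hM'⟩ := fill1_eq_lam hM
      obtain ⟨C2', Cv, hCM', h2, hv⟩ := fill1_eq_app hM'
      have hvv : ∀ s, fill1 Cv s = .app (.var 1) (.var 0) := by
        intro s
        rw [fill1_closed Cv 2 (x + 2) (by omega)
          (by rw [hv]; exact ⟨show 1 < 2 by omega, show 0 < 2 by omega⟩) s, hv]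
      have hcc : ∀ s, fill1 C2' s = .const c := fill1_eq_const h2
      subst hCx; subst hCb; subst hCA; subst hCM; subst hCM'
      refine ⟨C1, .const (.inr c), h1', fun s => ?_, Or.inl rfl⟩
      simp only [fill1_lam, fill1_app, fill1_const, fill1_eq_const hXi' s.lift, hs1 s, hvv, hcc]
      rw [Ft_const]
      simp only [Tm.lift_const]
      try rfl
  | app a b =>
      rw [Ft_app] at h
      obtain ⟨Cb, hCx, hb⟩ := fill1_eq_lam h
      obtain ⟨CA, CM, hCb, hA, hM⟩ := fill1_eq_app hb
      obtain ⟨CXi, C1', hCA, hXi', h1⟩ := fill1_eq_app hA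
      rw [hXi] at hXi'
      obtain ⟨C1, h1', hs1⟩ := bind_inv_lift C1' x t1 h1
      obtain ⟨CM', hCM, hM'⟩ := fill1_eq_lam hM
      obtain ⟨C2', Cv, hCM', h2, hv⟩ := fill1_eq_app hM'
      obtain ⟨C0, h0, hs0⟩ := bind_inv_lift2 C2' x (.app a b) h2
      have hvv : ∀ s, fill1 Cv s = .app (.var 1) (.var 0) := by
        intro s
        rw [fill1_closed Cv 2 (x + 2) (by omega)
          (by rw [hv]; exact ⟨show 1 < 2 by omega, show 0 < 2 by omega⟩) s, hv]
      subst hCx; subst hCb; subst hCA; subst hCM; subst hCM'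
      have hE : ∀ s' : Tm S.C, fill1 (Tm.lam (.app (C0.rename (· + 1)) (.var 0))) s'
          = .lam (.app (fill1 C0 s').lift (.var 0)) := by
        intro s'
        simp only [fill1_lam, fill1_app, fill1_var]
        rw [show s'.lift = s'.rename (· + 1) from rfl, fill1_rename]
        try rfl
      refine ⟨C1, .lam (.app (C0.rename (· + 1)) (.var 0)), h1', fun s => ?_, Or.inr
        ⟨C0, h0, fun c hc => Tm.noConfusion rfl (heq_of_eq hc), fun b' hb' => Tm.noConfusion rfl (heq_of_eq hb'), hE⟩⟩
      rw [hE s, Ft_eta]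
      simp only [fill1_lam, fill1_app, fill1_eq_const hXi' s.lift, hs1 s, hvv, hs0 s]
      try rfl

end DecLemmas

section Transport

variable {B : Type} {D : B → Type} (S : CanSys B D)

/-- Part (1) of Lemma 4.8 at level `α`. -/
def Part1 (α : Ordinal.{0}) : Prop :=
  ∀ (x : Nat) (Cx : Tm (Fin 1 ⊕ S.C)) (t' : Tm S.C),
    Steps S α (fill1 Cx (.var x)) t' →
    ∃ Cx' : Tm (Fin 1 ⊕ S.C), t' = fill1 Cx' (.var x) ∧
    ∀ t'' : Tm S.C, Steps S α (fill1 Cx t'') (fill1 Cx' t'')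

/-- Part (2) of Lemma 4.8 at level `α`. -/
def Part2 (α : Ordinal.{0}) : Prop :=
  ∀ (x : Nat) (Cx : Tm (Fin 1 ⊕ S.C)) (ρ : Tm S.C),
    Succ S α (fill1 Cx (.var x)) ρ → ∀ t : Tm S.C, Succ S α (fill1 Cx t) ρ

/-- Part (3) of Lemma 4.8 at level `α`. -/
def Part3 (α : Ordinal.{0}) : Prop :=
  ∀ (x : Nat) (Cx : Tm (Fin 1 ⊕ S.C)) (τ : ETy B),
    Sim S α (fill1 Cx (.var x)) τ → ∀ t : Tm S.C, Sim S α (fill1 Cx t) τ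

def Good (α : Ordinal.{0}) : Prop := Part1 S α ∧ Part2 S α ∧ Part3 S α

theorem steps_head {α : Ordinal.{0}} {a b c : Tm S.C}
    (h1 : Step S α a b) (h2 : Steps S α b c) : Steps S α a c := by
  refine Steps.rec (S := S) (motive_1 := fun _ _ _ _ => True)
    (motive_2 := fun β u v _ => ∀ a0, Step S β a0 u → Steps S β a0 v)
    (motive_3 := fun _ _ _ _ => True) (motive_4 := fun _ _ _ _ => True)
    (motive_5 := fun _ _ _ _ => True) (motive_6 := fun _ _ _ _ => True)
    ?_ ?_ ?_ ?_ ?_ ?_ ?_ ?_ ?_ ?_ ?_ ?_ ?_ ?_ ?_ ?_ ?_ ?_ ?_ ?_ ?_ ?_ ?_ ?_ ?_ ?_ ?_ ?_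
    h2 a h1
  all_goals try (intros; trivial)
  · intro α t a0 hst; exact Steps.tail (Steps.refl α a0) hst
  · intro α t u v hs hst ih _ a0 h0; exact Steps.tail (ih a0 h0) hst

/-- Transport of `⇝_{<α}` along a context, given the induction hypothesis below `α`. -/
theorem lead_transport {α : Ordinal.{0}} (IH : ∀ γ < α, Good S γ)
    {x : Nat} {Cx : Tm (Fin 1 ⊕ S.C)} {ρ : Tm S.C}
    (h : LeadLt S α (fill1 Cx (.var x)) ρ) (t : Tm S.C) :
    LeadLt S α (fill1 Cx t) ρ := by
  obtain @⟨_, γ, _, _, hγ, hl⟩ := h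
  obtain @⟨_, _, t', _, hsteps, hsucc⟩ := hl
  obtain ⟨Cx', ht', hst⟩ := (IH γ hγ).1 x Cx t' hsteps
  rw [ht'] at hsucc
  exact LeadLt.mk hγ (Lead.mk (hst t) ((IH γ hγ).2.1 x Cx' ρ hsucc t))

/-- Prepending a level-independent step to `⇝_{<α}`. -/
theorem leadlt_head {α : Ordinal.{0}} {a b ρ : Tm S.C}
    (hs : ∀ γ : Ordinal.{0}, Step S γ a b) (h : LeadLt S α b ρ) : LeadLt S α a ρ := by
  obtain @⟨_, γ, _, _, hγ, hl⟩ := h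
  obtain ⟨hsteps, hsucc⟩ := hl
  exact LeadLt.mk hγ (Lead.mk (steps_head S (hs γ) hsteps) hsucc)

/-- Single-step transport (part (1) of Lemma 4.8, one-step version). -/
theorem step_transport {α : Ordinal.{0}} (IH2 : ∀ γ < α, Part2 S γ)
    {u v : Tm S.C} (h : Step S α u v) (x : Nat) (Cx : Tm (Fin 1 ⊕ S.C))
    (hf : fill1 Cx (.var x) = u) :
    ∃ Cx' : Tm (Fin 1 ⊕ S.C), v = fill1 Cx' (.var x) ∧
    ∀ t : Tm S.C, Step S α (fill1 Cx t) (fill1 Cx' t) := by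
  refine Step.rec (S := S)
    (motive_1 := fun β a b _ => β = α → ∀ (x : Nat) (Cx : Tm (Fin 1 ⊕ S.C)),
    fill1 Cx (.var x) = a →
    ∃ Cx' : Tm (Fin 1 ⊕ S.C), b = fill1 Cx' (.var x) ∧
      ∀ t : Tm S.C, Step S α (fill1 Cx t) (fill1 Cx' t))
    (motive_2 := fun _ _ _ _ => True) (motive_3 := fun _ _ _ _ => True)
    (motive_4 := fun _ _ _ _ => True) (motive_5 := fun _ _ _ _ => True)
    (motive_6 := fun _ _ _ _ => True)
    ?_ ?_ ?_ ?_ ?_ ?_ ?_ ?_ ?_ ?_ ?_ ?_ ?_ ?_ ?_ ?_ ?_ ?_ ?_ ?_ ?_ ?_ ?_ ?_ ?_ ?_ ?_ ?_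
    h rfl x Cx hf
  all_goals try (intros; trivial)
  -- beta
  · intro β a s hβ x Cx hf
    subst hβ
    obtain ⟨CL, CS, hCx, hL, hS⟩ := fill1_eq_app hf
    obtain ⟨CA, hCL, hA⟩ := fill1_eq_lam hL
    subst hCx; subst hCL
    refine ⟨CA.subst0 CS, ?_, fun t => ?_⟩
    · rw [fill1_subst0, hS, show ((Tm.var x : Tm S.C)).lift = .var (x+1) from rfl, hA]
    · rw [fill1_subst0]
      exact Step.beta _ (fill1 CA (Tm.lift t)) (fill1 CS t)
  -- eta
  · intro β w hβ x Cx hf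
    subst hβ
    obtain ⟨C1, hCx, h1⟩ := fill1_eq_lam hf
    obtain ⟨C11, C12, hC1, h11, h12⟩ := fill1_eq_app h1
    obtain ⟨C0, h0, hs⟩ := bind_inv_lift C11 x w h11
    have h12' : ∀ s, fill1 C12 s = .var 0 := by
      intro s
      rw [fill1_closed C12 1 (x + 1) (by omega) (by rw [h12]; exact show 0 < 1 by omega) s,
        h12]
    subst hCx; subst hC1
    refine ⟨C0, h0.symm, fun t => ?_⟩
    simp only [fill1_lam, fill1_app, hs t, h12']
    exact Step.eta _ (fill1 C0 t)
  -- crule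
  · intro β γ hγ τ1 τ2 h1 c hc ρ1 hρ1 tt hs _ hβ x Cx hf
    subst hβ
    have hT1 : IsT1 (ETy.arr τ1 τ2) := by
      by_cases hT : IsT1 (ETy.arr τ1 τ2)
      · exact hT
      · rw [S.TT_invalid _ hT (by intro hh; cases hh)] at hc
        exact absurd hc (Set.notMem_empty c)
    obtain ⟨cc, hcc⟩ := S.TT_const _ hT1
      (fun τ2' hh => by cases hh; exact h1 rfl) c hc
    obtain ⟨Cc, Ct, hCx, hCc, hCt⟩ := fill1_eq_app hf
    subst hCx
    rw [hcc] at hCc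
    have hCc' := fill1_eq_const hCc
    refine ⟨embedC (S.F τ1 τ2 c ρ1), (fill1_embed _ _).symm, fun t => ?_⟩
    rw [fill1_app, hCc' t, ← hcc, fill1_embed]
    exact Step.crule hγ h1 hc hρ1 (IH2 γ hγ x Ct ρ1 (hCt ▸ hs) t)
  -- appL
  · intro β a a' s hstep ih hβ x Cx hf
    subst hβ
    obtain ⟨C1, C2, hCx, h1, h2⟩ := fill1_eq_app hf
    obtain ⟨C1', h1', hst⟩ := ih rfl x C1 h1
    subst hCx
    refine ⟨.app C1' C2, ?_, fun t => ?_⟩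
    · rw [fill1_app, ← h1', h2]
    · exact Step.appL _ (hst t)
  -- appR
  · intro a β s s' hstep ih hβ x Cx hf
    subst hβ
    obtain ⟨C1, C2, hCx, h1, h2⟩ := fill1_eq_app hf
    obtain ⟨C2', h2', hst⟩ := ih rfl x C2 h2
    subst hCx
    refine ⟨.app C1 C2', ?_, fun t => ?_⟩
    · rw [fill1_app, ← h2', h1]
    · exact Step.appR _ (hst t)
  -- lam
  · intro β a a' hstep ih hβ x Cx hf
    subst hβ
    obtain ⟨C1, hCx, h1⟩ := fill1_eq_lam hf
    obtain ⟨C1', h1', hst⟩ := ih rfl (x + 1) C1 h1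
    subst hCx
    refine ⟨.lam C1', ?_, fun t => ?_⟩
    · rw [fill1_lam, Tm.lift_var, ← h1']
    · exact Step.lam (hst t.lift)

/-- Part (1) of Lemma 4.8. -/
theorem part1_holds {α : Ordinal.{0}} (IH2 : ∀ γ < α, Part2 S γ) : Part1 S α := by
  intro x Cx t' hsteps
  refine Steps.rec (S := S) (motive_1 := fun _ _ _ _ => True)
    (motive_2 := fun β a b _ => β = α → ∀ Cx : Tm (Fin 1 ⊕ S.C),
    fill1 Cx (.var x) = a →
    ∃ Cx' : Tm (Fin 1 ⊕ S.C), b = fill1 Cx' (.var x) ∧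
      ∀ t'' : Tm S.C, Steps S α (fill1 Cx t'') (fill1 Cx' t''))
    (motive_3 := fun _ _ _ _ => True) (motive_4 := fun _ _ _ _ => True)
    (motive_5 := fun _ _ _ _ => True) (motive_6 := fun _ _ _ _ => True)
    ?_ ?_ ?_ ?_ ?_ ?_ ?_ ?_ ?_ ?_ ?_ ?_ ?_ ?_ ?_ ?_ ?_ ?_ ?_ ?_ ?_ ?_ ?_ ?_ ?_ ?_ ?_ ?_
    hsteps rfl Cx rfl
  all_goals try (intros; trivial)
  · intro β t hβ Cx hf
    exact ⟨Cx, hf.symm, fun t'' => Steps.refl α _⟩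
  · intro β t m v hst hstep ih _ hβ Cx hf
    subst hβ
    obtain ⟨Cm, hm, hsm⟩ := ih rfl Cx hf
    obtain ⟨Cv, hv, hsv⟩ := step_transport S IH2 hstep x Cm hm.symm
    exact ⟨Cv, hv, fun t'' => Steps.tail (hsm t'') (hsv t'')⟩

end Transport

section Main

variable {B : Type} {D : B → Type} (S : CanSys B D)

/-- Part (3) of Lemma 4.8. -/
theorem part3_holds {α : Ordinal.{0}} (IH : ∀ γ < α, Good S γ) : Part3 S α := by
  intro x Cx τ h t
  generalize hu : fill1 Cx (.var x) = u at h
  cases h with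
  | ofA _ b =>
      rw [fill1_eq_const (c := S.cA b) hu t]
      exact Sim.ofA _ b
  | ofH _ =>
      rw [fill1_closed Cx 0 x (Nat.zero_le x)
        (by rw [hu]; exact ⟨trivial, show 1 < 2 by omega⟩) t, hu]
      exact Sim.ofH _
  | @ofKom _ t0 h' =>
      obtain ⟨C0, h0, hs⟩ := Kt_dec S hu
      rw [← h0] at h'
      rw [hs t]
      exact Sim.ofKom (lead_transport S IH h' t)
  | @ofKeps _ t0 h' =>
      obtain ⟨C0, h0, hs⟩ := Kt_dec S hu
      rw [← h0] at h'
      rw [hs t]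
      exact Sim.ofKeps (lead_transport S IH h' t)
  | @ofF _ γ1 γ2 hγ1 hγ2 t1 t2 τ1 τ2 hs1 hs2 =>
      obtain ⟨C1, C2, h1, hall, hdisj⟩ := Ft_dec S hu
      rw [← h1] at hs1
      have hs1' := (IH γ1 hγ1).2.2 x C1 τ1 hs1 t
      rcases hdisj with h2 | ⟨C0, h0, hnc, hnl, _⟩
      · rw [← h2] at hs2
        have hs2' := (IH γ2 hγ2).2.2 x C2 τ2 hs2 t
        rw [hall t]
        exact Sim.ofF hγ1 hγ2 hs1' hs2'
      · obtain ⟨b, hb, _⟩ := Sim_nonlam S hs2 hnl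
        exact absurd hb (hnc (S.cA b))
  | @ofFom _ γ hγ t1 t2 hs1 =>
      obtain ⟨C1, C2, h1, hall, _⟩ := Ft_dec S hu
      rw [← h1] at hs1
      rw [hall t]
      exact Sim.ofFom hγ ((IH γ hγ).2.2 x C1 _ hs1 t)

/-- Part (2) of Lemma 4.8. -/
theorem part2_holds {α : Ordinal.{0}} (IH : ∀ γ < α, Good S γ) (P3 : Part3 S α) :
    Part2 S α := by
  intro x Cx ρ h t
  generalize hu : fill1 Cx (.var x) = u at h
  cases h with
  | @refl τ hτ ρ' hρ _ =>
      rw [fill1_closed Cx 0 x (Nat.zero_le x)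
        (by rw [hu]; exact canon_closed S _ τ hτ hρ 0) t, hu]
      exact Succ.refl hτ hρ _
  | @fn τ1 τ2 ρ' hρ _ t0 hld =>
      refine Succ.fn hρ fun t1 ht1 => ?_
      have h2 := lead_transport S IH (x := x) (Cx := .app Cx (embedC t1))
        (by simpa only [fill1_app, fill1_embed, hu] using hld t1 ht1) t
      simpa only [fill1_app, fill1_embed] using h2
  | topLA _ b =>
      rw [fill1_closed Cx 0 x (Nat.zero_le x) (by rw [hu]; exact ⟨trivial, trivial⟩) t, hu]
      exact Succ.topLA _ b
  | topLH _ =>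
      rw [fill1_closed Cx 0 x (Nat.zero_le x)
        (by rw [hu]; exact ⟨trivial, trivial, show 1 < 2 by omega⟩) t, hu]
      exact Succ.topLH _
  | @topA b c hc _ =>
      rw [fill1_closed Cx 0 x (Nat.zero_le x)
        (by rw [hu]; exact ⟨trivial, canon_closed S c _ (by intro hh; cases hh) hc 0⟩) t, hu]
      exact Succ.topA hc _
  | @topH c hc _ =>
      have hcl : ClosedAt 0 (S.Ht c) := by
        refine ⟨trivial, ?_⟩
        rcases hc with hh | hh
        · obtain ⟨cc, hcc⟩ := top_is_const S
          rw [hh, hcc]; exact trivial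
        · obtain ⟨cc, hcc⟩ := bot_is_const S
          rw [hh, hcc]; exact trivial
      rw [fill1_closed Cx 0 x (Nat.zero_le x) (by rw [hu]; exact hcl) t, hu]
      exact Succ.topH hc _
  | @xiTop _ hα t1 t2 τ' hs1 h2 =>
      obtain ⟨CA, C2, hCx, hA, h2'⟩ := fill1_eq_app hu
      obtain ⟨CXi, C1, hCA, hXi', h1'⟩ := fill1_eq_app hA
      subst hCx; subst hCA
      rw [show S.XiT = .const S.cXi from rfl] at hXi'
      rw [← h1'] at hs1
      have hs1' := P3 x C1 τ' hs1 t
      have h2'' : ∀ t3 ∈ S.TT τ', LeadLt S α (.app (fill1 C2 t) t3) S.top := by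
        intro t3 ht3
        have hsub : LeadLt S α (fill1 (.app C2 (embedC t3)) (.var x)) S.top := by
          simp only [fill1_app, fill1_embed, h2']
          exact h2 t3 ht3
        simpa only [fill1_app, fill1_embed] using lead_transport S IH hsub t
      simp only [fill1_app, fill1_eq_const hXi' t]
      exact Succ.xiTop hα hs1' h2''
  | @xiHTop _ hα t1 t2 τ' hs1 h2 =>
      obtain ⟨C0, h0, hall⟩ := Ht_dec S hu
      obtain ⟨CA, C2, hC0, hA, h2'⟩ := fill1_eq_app h0
      obtain ⟨CXi, C1, hCA, hXi', h1'⟩ := fill1_eq_app hA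
      subst hC0; subst hCA
      rw [show S.XiT = .const S.cXi from rfl] at hXi'
      rw [← h1'] at hs1
      have hs1' := P3 x C1 τ' hs1 t
      have h2'' : ∀ t3 ∈ S.TT τ', LeadLt S α (S.Ht (.app (fill1 C2 t) t3)) S.top := by
        intro t3 ht3
        have hsub : LeadLt S α
            (fill1 (HtC S (.app C2 (embedC t3))) (.var x)) S.top := by
          rw [fill1_HtC]
          simp only [fill1_app, fill1_embed, h2']
          exact h2 t3 ht3
        have := lead_transport S IH hsub t
        rw [fill1_HtC] at this
        simpa only [fill1_app, fill1_embed] using this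
      rw [hall t]
      simp only [fill1_app, fill1_eq_const hXi' t]
      exact Succ.xiHTop hα hs1' h2''
  | @flTopEps _ hα t1 t2 hs1 =>
      obtain ⟨CL, CF, hCx, hL, hF⟩ := fill1_eq_app hu
      subst hCx
      rw [show S.LT = .const S.cL from rfl] at hL
      obtain ⟨C1, C2, h1, hall, _⟩ := Ft_dec S hF
      rw [← h1] at hs1
      have hs1' := P3 x C1 .eps hs1 t
      simp only [fill1_app, fill1_eq_const hL t, hall t]
      exact Succ.flTopEps hα hs1'
  | @flTop _ hα t1 t2 τ' hτ hs1 h2 =>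
      obtain ⟨CL, CF, hCx, hL, hF⟩ := fill1_eq_app hu
      subst hCx
      rw [show S.LT = .const S.cL from rfl] at hL
      obtain ⟨C1, C2, h1, hall, hdisj⟩ := Ft_dec S hF
      rw [← h1] at hs1
      have hs1' := P3 x C1 τ' hs1 t
      rw [show S.LT = .const S.cL from rfl] at h2
      rcases hdisj with h2c | ⟨C0, h0, hnc, hnl, hη⟩
      · have hsub : LeadLt S α
            (fill1 (.app (.const (.inr S.cL)) C2) (.var x)) S.top := by
          simp only [fill1_app, fill1_const, h2c]
          exact h2
        have h2' := lead_transport S IH hsub t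
        simp only [fill1_app, fill1_const] at h2'
        simp only [fill1_app, fill1_eq_const hL t, hall t]
        exact Succ.flTop hα hτ hs1' h2'
      · have hsub : LeadLt S α
            (fill1 (.app (.const (.inr S.cL)) C0) (.var x)) S.top := by
          simp only [fill1_app, fill1_const, h0]
          exact h2
        have h2' := lead_transport S IH hsub t
        simp only [fill1_app, fill1_const] at h2'
        have h2'' : LeadLt S α (.app (.const S.cL) (fill1 C2 t)) S.top := by
          refine leadlt_head S (fun γ => ?_) h2'
          rw [hη t]
          exact Step.appR _ (Step.eta γ (fill1 C0 t))
        simp only [fill1_app, fill1_eq_const hL t, hall t]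
        exact Succ.flTop hα hτ hs1' h2''
  | @hiTop _ hα t1 h1 =>
      obtain ⟨C0, h0, hall⟩ := Ht_dec S hu
      rw [← h0] at h1
      rw [hall t]
      exact Succ.hiTop hα (lead_transport S IH h1 t)
  | @xiBot _ hα t1 t2 τ' γ hγ hH hs1 t3 h3 hb =>
      obtain ⟨CA, C2, hCx, hA, h2'⟩ := fill1_eq_app hu
      obtain ⟨CXi, C1, hCA, hXi', h1'⟩ := fill1_eq_app hA
      subst hCx; subst hCA
      rw [show S.XiT = .const S.cXi from rfl] at hXi'
      rw [← h1'] at hs1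
      have hs1' := P3 x C1 τ' hs1 t
      have hH' : Succ S γ (S.Ht (.app (.app S.XiT (fill1 C1 t)) (fill1 C2 t))) S.top := by
        have hsub : Succ S γ
            (fill1 (HtC S (.app (.app (.const (.inr S.cXi)) C1) C2)) (.var x)) S.top := by
          rw [fill1_HtC]
          simp only [fill1_app, fill1_const, h1', h2']
          exact hH
        have := (IH γ hγ).2.1 x _ _ hsub t
        rw [fill1_HtC] at this
        simpa only [fill1_app, fill1_const, show S.XiT = .const S.cXi from rfl] using this
      have hb' : LeadLt S α (.app (fill1 C2 t) t3) S.bot := by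
        have hsub : LeadLt S α (fill1 (.app C2 (embedC t3)) (.var x)) S.bot := by
          simp only [fill1_app, fill1_embed, h2']
          exact hb
        simpa only [fill1_app, fill1_embed] using lead_transport S IH hsub t
      simp only [fill1_app, fill1_eq_const hXi' t]
      exact Succ.xiBot hα hγ hH' hs1' h3 hb'

/-- Lemma 4.8, all parts, at every level. -/
theorem good_all : ∀ α : Ordinal.{0}, Good S α := by
  intro α
  induction α using Ordinal.induction with
  | h α IH =>
    have P3 : Part3 S α := part3_holds S IH
    have P1 : Part1 S α := part1_holds S (fun γ hγ => (IH γ hγ).2.1)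
    exact ⟨P1, part2_holds S IH P3, P3⟩

end Main
/-- **Lemma 4.8.**  For a variable `x`, a (unary) context `Cx` and an ordinal `α`:
(1) if `Cx[x] ↠_{≤α} t'` then `t' ≡ Cx'[x]` for some context `Cx'` with
`Cx[t''] ↠_{≤α} Cx'[t'']` for every `t''`; (2) if `Cx[x] ≻_α ρ` then `Cx[t] ≻_α ρ`
for every `t`; (3) if `Cx[x] ∼_α τ` then `Cx[t] ∼_α τ` for every `t`. -/
theorem context_var_lemma {B : Type} [Finite B] {D : B → Type} (hD : ∀ b, Nonempty (D b))
    (S : CanSys B D) (α : Ordinal.{0}) (x : Nat) (Cx : Tm (Fin 1 ⊕ S.C)) :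
    -- (1)
    (∀ t' : Tm S.C, Steps S α (fill1 Cx (.var x)) t' →
        ∃ Cx' : Tm (Fin 1 ⊕ S.C), t' = fill1 Cx' (.var x) ∧
          ∀ t'' : Tm S.C, Steps S α (fill1 Cx t'') (fill1 Cx' t'')) ∧
    -- (2)
    (∀ ρ : Tm S.C, Succ S α (fill1 Cx (.var x)) ρ →
        ∀ t : Tm S.C, Succ S α (fill1 Cx t) ρ) ∧
    -- (3)
    (∀ τ : ETy B, Sim S α (fill1 Cx (.var x)) τ →
        ∀ t : Tm S.C, Sim S α (fill1 Cx t) τ) := by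
  obtain ⟨P1, P2, P3⟩ := good_all S α
  exact ⟨fun t' h => P1 x Cx t' h, fun ρ h t => P2 x Cx ρ h t, fun τ h t => P3 x Cx τ h t⟩

end ILM
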